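/- Let n ≥ 1 and let r ≡ 2 (mod 4), r ≥ 2. The kernel of the epimorphism p : A_{r,n} → G_{r/2,n} has exactly 2^{n−1} elements. -/
import Mathlib


open Multiplicative

namespace ACP

/-- The action of `Sₙ` on color vectors by permuting coordinates. -/
def permAct (r n : ℕ) : Equiv.Perm (Fin n) →* MulAut (Fin n → Multiplicative (ZMod r)) where
  toFun τ :=
    { toFun := fun z => z ∘ τ.symm
      invFun := fun z => z ∘ τ
      left_inv := fun z => by ext i; simp
      right_inv := fun z => by ext i; simp
      map_mul' := fun z w => rfl }
  map_one' := by ext z i; rfl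
  map_mul' a b := by ext z i; rfl

/-- The group of colored permutations `G_{r,n} = ℤ_r ≀ Sₙ`. -/
abbrev G (r n : ℕ) : Type := (Fin n → Multiplicative (ZMod r)) ⋊[permAct r n] Equiv.Perm (Fin n)

/-- The Coxeter-like generators: `gen r n 0 = s₀` colors the digit 1 by one color,
`gen r n i = sᵢ` (for `1 ≤ i ≤ n-1`) is the adjacent transposition `(i, i+1)`. -/
def gen (r n : ℕ) (i : ℕ) : G r n :=
  if h : 0 < i ∧ i < n then
    ⟨1, Equiv.swap ⟨i - 1, by omega⟩ ⟨i, h.2⟩⟩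
  else
    ⟨fun j => if (j : ℕ) = 0 then ofAdd (1 : ZMod r) else 1, 1⟩

def zmod2ToUnits : Multiplicative (ZMod 2) →* ℤˣ where
  toFun z := (-1) ^ (toAdd z).val
  map_one' := rfl
  map_mul' := by decide

def csumHom (r n : ℕ) (hr : 2 ∣ r) :
    (Fin n → Multiplicative (ZMod r)) →* Multiplicative (ZMod 2) where
  toFun z := ofAdd (∑ i, ZMod.castHom hr (ZMod 2) (toAdd (z i)))
  map_one' := by simp
  map_mul' z w := by
    have h : ∀ i, ZMod.castHom hr (ZMod 2) (toAdd ((z * w) i))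
        = ZMod.castHom hr (ZMod 2) (toAdd (z i)) + ZMod.castHom hr (ZMod 2) (toAdd (w i)) :=
      fun i => map_add _ _ _
    simp only [h, Finset.sum_add_distrib, ofAdd_add]

/-- The sign character of `G_{r,n}` (for even `r`): sends every Coxeter-like
generator `sᵢ` to `-1`. -/
noncomputable def sgn (r n : ℕ) (hr : 2 ∣ r) : G r n →* ℤˣ :=
  SemidirectProduct.lift (zmod2ToUnits.comp (csumHom r n hr)) Equiv.Perm.sign
    (by
      intro g
      refine MonoidHom.ext fun z => ?_
      have h1 : ∀ a x : ℤˣ, a * x * a⁻¹ = x := fun a x => by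
        rw [mul_comm a x, mul_inv_cancel_right]
      simp only [MonoidHom.comp_apply, MulEquiv.coe_toMonoidHom, MulAut.conj_apply, h1]
      congr 1
      show csumHom r n hr (z ∘ g.symm) = csumHom r n hr z
      unfold csumHom
      simp only [MonoidHom.coe_mk, OneHom.coe_mk]
      congr 1
      exact Equiv.sum_comp g.symm fun j => ZMod.castHom hr (ZMod 2) (toAdd (z j)))

/-- The group of alternating colored permutations `A_{r,n}`: the kernel of the sign
character of `G_{r,n}`. -/
noncomputable def Arn (r n : ℕ) (hr : 2 ∣ r) : Subgroup (G r n) := (sgn r n hr).ker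

/-- The generators of `A_{r,n}`: `agen r n 0 = a₀ = s₀²` and
`agen r n i = aᵢ = s₀^{r/2} sᵢ` for `i ≥ 1`. -/
def agen (r n : ℕ) (i : ℕ) : G r n :=
  if i = 0 then gen r n 0 ^ 2 else gen r n 0 ^ (r / 2) * gen r n i

/-- The generating set `𝒜 = {a₀, a₁, a₁⁻¹, a₂, …, a_{n-1}}` of `A_{r,n}`. -/
def Aset (r n : ℕ) : Set (G r n) :=
  {x | ∃ i ≤ n - 1, x = agen r n i} ∪ {(agen r n 1)⁻¹}

/-- The Coxeter-like generating set `{s₀, …, s_{n-1}}` of `G_{r,n}`. -/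
def Sset (r n : ℕ) : Set (G r n) := {x | ∃ i < n, x = gen r n i}

/-- Word length of `g` with respect to a generating set `B`. -/
noncomputable def wordLength {H : Type*} [Group H] (B : Set H) (g : H) : ℕ :=
  sInf {k | ∃ w : List H, (∀ x ∈ w, x ∈ B) ∧ w.prod = g ∧ w.length = k}

/-- The element `a₁² ∈ A_{r,n}`. -/
noncomputable def a1sq (r n : ℕ) (hr : 2 ∣ r) : ↥(Arn r n hr) :=
  ⟨agen r n 1 ^ 2, by rw [Arn, MonoidHom.mem_ker, map_pow]; exact Int.units_sq _⟩

/-- The operator `a ⊘ 2` : the residue mod `r/2` of `a/2` (`a` even) or of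
`(a + r/2)/2` (`a` odd). -/
def oslash (r a : ℕ) : ℕ :=
  if a % 2 = 0 then (a / 2) % (r / 2) else ((a + r / 2) / 2) % (r / 2)

/-- `z_i(π)`, the color of digit `i+1` of `π`, as a natural number in `{0, …, r-1}`. -/
def zval (r n : ℕ) (π : G r n) (i : Fin n) : ℕ := (toAdd (π.left i)).val

/-- `csum(π) = Σ z_i(π)`. -/
def csum (r n : ℕ) (π : G r n) : ℕ := ∑ i, zval r n π i

/-- Rank of the colored letter `b^{[c]}` (with `1 ≤ b ≤ n`, `0 ≤ c ≤ r-1`) in the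
length order `n^{[r-1]} < ⋯ < 1^{[1]} < 1 < 2 < ⋯ < n`. -/
def rank (r n : ℕ) (b c : ℕ) : ℕ :=
  if c = 0 then n * (r - 1) + (b - 1) else (n - b) * (r - 1) + (r - 1 - c)

/-- Rank (in the length order) of the letter in position `i` of the window of `π`. -/
def colRank (r n : ℕ) (π : G r n) (i : Fin n) : ℕ :=
  rank r n ((π.right i : ℕ) + 1) (zval r n π (π.right i))

/-- The inversion number of `π ∈ G_{r,n}` with respect to the length order. -/
noncomputable def inv (r n : ℕ) (π : G r n) : ℕ :=
  Nat.card {p : Fin n × Fin n // p.1 < p.2 ∧ colRank r n π p.2 < colRank r n π p.1}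

/-- The ordinary inversion number of a permutation. -/
noncomputable def invPerm (n : ℕ) (τ : Equiv.Perm (Fin n)) : ℕ :=
  Nat.card {p : Fin n × Fin n // p.1 < p.2 ∧ τ p.2 < τ p.1}

/-- The covering map `p : A_{r,n} → G_{r/2,n}`, `p(z, τ) = ((zᵢ ⊘ 2)ᵢ, τ)`. -/
def pmap (r n : ℕ) (π : G r n) : G (r / 2) n :=
  ⟨fun i => ofAdd ((oslash r (zval r n π i) : ZMod (r / 2))), π.right⟩

/-- The section `s : G_{r/2,n} → A_{r,n}`: doubles all colors (mod `r`), adding `r/2`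
to the color of the digit `1` when `inv(|π|)` is odd. -/
noncomputable def smap (r n : ℕ) (π : G (r / 2) n) : G r n :=
  ⟨fun d => ofAdd
      (((2 * zval (r / 2) n π d +
        if (d : ℕ) = 0 ∧ invPerm n π.right % 2 = 1 then r / 2 else 0 : ℕ) : ZMod r)),
   π.right⟩

/-- `c(π) = Σ_{i : z_i(π) ≠ 0} (i - 1)` (digits are `1`-based). -/
def cstat (r n : ℕ) (π : G r n) : ℕ :=
  ∑ i : Fin n, if zval r n π i ≠ 0 then (i : ℕ) else 0

/-- The number of absolute transparent inversions of `π`. -/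
noncomputable def tinv (r n : ℕ) (π : G r n) : ℕ :=
  Nat.card {p : Fin n × Fin n //
    zval r n π p.1 = r / 2 ∧ p.2 < p.1 ∧ π.right⁻¹ p.1 < π.right⁻¹ p.2}

/-- The (digit-indexed) Lehmer code `l_i = #{j : j > i, τ⁻¹(i) > τ⁻¹(j)}`. -/
noncomputable def lehmer (n : ℕ) (τ : Equiv.Perm (Fin n)) (i : Fin n) : ℕ :=
  Nat.card {j : Fin n // i < j ∧ τ⁻¹ j < τ⁻¹ i}


/-- `μ(π)`: the minimum of `β(ω) + n(ω)` over all factorizations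
`ω = b₀ s₀^{i₁} b₁ ⋯ s₀^{i_{k+1}} b_{k+1}` of `π`, where each `b_u` is a word in
`s₁, …, s_{n-1}` only, `n(ω)` is the number of letters `sᵢ` with `i ≠ 0`, and
`β(ω) = Σ_u (i_u ⊘ 2)`. -/
noncomputable def mu (r n : ℕ) (π : G r n) : ℕ :=
  sInf {m | ∃ (b₀ : List ℕ) (L : List (ℕ × List ℕ)),
    (∀ x ∈ b₀, 1 ≤ x ∧ x ≤ n - 1) ∧
    (∀ q ∈ L, ∀ x ∈ q.2, 1 ≤ x ∧ x ≤ n - 1) ∧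
    π = (b₀.map (gen r n)).prod *
        (L.map (fun q => gen r n 0 ^ q.1 * (q.2.map (gen r n)).prod)).prod ∧
    m = (L.map (fun q => oslash r q.1)).sum +
        (b₀.length + (L.map (fun q => q.2.length)).sum)}

/-- The flag-inversion number on `A_{r,n}`:
`finv_A(π) = (r/2)·inv(|π|) + Σᵢ (cᵢ(π) ⊘ 2)` where `cᵢ(π) = r - zᵢ(π⁻¹) (mod r)`. -/
noncomputable def finvA (r n : ℕ) (π : G r n) : ℕ :=
  (r / 2) * invPerm n π.right + ∑ i, oslash r ((r - zval r n π⁻¹ i) % r)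

/-- The number of (colored) right-to-left minima of `π` whose color is not in `{0, r/2}`. -/
noncomputable def rtlMinA (r n : ℕ) (π : G r n) : ℕ :=
  Nat.card {i : Fin n // (∀ j : Fin n, i < j → π.right i < π.right j) ∧
    zval r n π (π.right i) ≠ 0 ∧ zval r n π (π.right i) ≠ r / 2}

/-- The defining relators of the Coxeter-like presentation of `A_{r,n}` on generators
`x₀, …, x_{n-1}`. -/
def rels (r n : ℕ) : Set (FreeGroup (Fin n)) :=
  {w | ∃ i : Fin n, (i : ℕ) = 0 ∧ w = FreeGroup.of i ^ (r / 2)} ∪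
  {w | ∃ i : Fin n, (i : ℕ) = 1 ∧ w = FreeGroup.of i ^ 4} ∪
  {w | ∃ i : Fin n, 2 ≤ (i : ℕ) ∧ w = FreeGroup.of i ^ 2} ∪
  {w | ∃ i j : Fin n, (i : ℕ) ≠ 1 ∧ (j : ℕ) ≠ 1 ∧ (i : ℕ) + 1 < (j : ℕ) ∧
    w = FreeGroup.of i * FreeGroup.of j * (FreeGroup.of i)⁻¹ * (FreeGroup.of j)⁻¹} ∪
  {w | ∃ i j : Fin n, 1 ≤ (i : ℕ) ∧ (j : ℕ) = (i : ℕ) + 1 ∧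
    w = (FreeGroup.of i * FreeGroup.of j) ^ 3} ∪
  {w | ∃ i j : Fin n, (i : ℕ) = 0 ∧ (j : ℕ) = 1 ∧
    w = (FreeGroup.of i * FreeGroup.of j) ^ (2 * r)} ∪
  {w | ∃ i j : Fin n, (i : ℕ) = 0 ∧ (j : ℕ) = 1 ∧
    w = (FreeGroup.of i * (FreeGroup.of j)⁻¹) ^ (2 * r)} ∪
  {w | ∃ i j : Fin n, (i : ℕ) = 0 ∧ (j : ℕ) = 1 ∧
    w = FreeGroup.of i * FreeGroup.of j ^ 2 * (FreeGroup.of i)⁻¹ * (FreeGroup.of j ^ 2)⁻¹} ∪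
  {w | ∃ i j : Fin n, (i : ℕ) = 1 ∧ 2 < (j : ℕ) ∧
    w = FreeGroup.of i * FreeGroup.of j * FreeGroup.of i * (FreeGroup.of j)⁻¹}

end ACP

namespace ACPAux

open ACP Multiplicative

lemma oslash_zero_iff (r a : ℕ) (hr : r % 4 = 2) (ha : a < r) :
    ACP.oslash r a = 0 ↔ a = 0 ∨ a = r / 2 := by
  unfold ACP.oslash
  split <;> rename_i h
  · rw [Nat.mod_eq_of_lt (by omega)]; omega
  · by_cases hlt : (a + r / 2) / 2 < r / 2
    · rw [Nat.mod_eq_of_lt hlt]; omega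
    · rw [Nat.mod_eq_sub_mod (le_of_not_gt hlt), Nat.mod_eq_of_lt (by omega)]; omega

lemma pmap_eq_one_iff (r n : ℕ) (hr : r % 4 = 2) (x : ACP.G r n) :
    ACP.pmap r n x = 1 ↔
      x.right = 1 ∧ ∀ i, ACP.zval r n x i = 0 ∨ ACP.zval r n x i = r / 2 := by
  haveI : NeZero r := ⟨by omega⟩
  have hz : ∀ i, ACP.zval r n x i < r := fun i => ZMod.val_lt _
  constructor
  · intro h
    have hl : (ACP.pmap r n x).left = (1 : ACP.G (r/2) n).left := by rw [h]
    have hrg : (ACP.pmap r n x).right = (1 : ACP.G (r/2) n).right := by rw [h]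
    refine ⟨hrg, fun i => ?_⟩
    have h1 := congrFun hl i
    have h2 : ((ACP.oslash r (ACP.zval r n x i) : ℕ) : ZMod (r/2)) = 0 := by
      have := ofAdd_eq_one.mp h1
      exact this
    have h3 : (r/2) ∣ ACP.oslash r (ACP.zval r n x i) :=
      (ZMod.natCast_eq_zero_iff _ _).mp h2
    have h4 : ACP.oslash r (ACP.zval r n x i) < r / 2 := by
      unfold ACP.oslash
      split <;> exact Nat.mod_lt _ (by omega)
    have h5 : ACP.oslash r (ACP.zval r n x i) = 0 := Nat.eq_zero_of_dvd_of_lt h3 h4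
    exact (oslash_zero_iff r _ hr (hz i)).mp h5
  · rintro ⟨hrg, hvals⟩
    refine SemidirectProduct.ext ?_ hrg
    funext i
    show ofAdd ((ACP.oslash r (ACP.zval r n x i) : ZMod (r/2))) = 1
    rw [(oslash_zero_iff r _ hr (hz i)).mpr (hvals i)]
    simp

lemma sgn_apply (r n : ℕ) (h2 : 2 ∣ r) (x : ACP.G r n) :
    ACP.sgn r n h2 x =
      ACP.zmod2ToUnits (ACP.csumHom r n h2 x.left) * Equiv.Perm.sign x.right := by
  conv_lhs => rw [← SemidirectProduct.inl_left_mul_inr_right x]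
  rw [map_mul, ACP.sgn, SemidirectProduct.lift_inl, SemidirectProduct.lift_inr]
  rfl

lemma left_eq (r n : ℕ) [NeZero r] (x : ACP.G r n) (i : Fin n) :
    x.left i = ofAdd (((ACP.zval r n x i : ℕ) : ZMod r)) := by
  unfold ACP.zval
  rw [ZMod.natCast_rightInverse (toAdd (x.left i))]
  rfl

lemma mem_iff (r n : ℕ) (hr : r % 4 = 2) (h2 : 2 ∣ r) (x : ACP.G r n)
    (hright : x.right = 1) :
    x ∈ ACP.Arn r n h2 ↔ (∑ i, ((ACP.zval r n x i : ℕ) : ZMod 2)) = 0 := by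
  haveI : NeZero r := ⟨by omega⟩
  rw [ACP.Arn, MonoidHom.mem_ker, sgn_apply, hright, map_one, mul_one]
  have hz : ∀ s, ACP.zmod2ToUnits s = 1 ↔ s = 1 := by decide
  rw [hz]
  show ofAdd (∑ i, (ZMod.castHom h2 (ZMod 2)) (toAdd (x.left i))) = 1 ↔ _
  rw [ofAdd_eq_one]
  have hc : ∀ i, (ZMod.castHom h2 (ZMod 2)) (toAdd (x.left i))
      = ((ACP.zval r n x i : ℕ) : ZMod 2) := by
    intro i
    have h1 : toAdd (x.left i) = ((ACP.zval r n x i : ℕ) : ZMod r) :=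
      (ZMod.natCast_rightInverse (toAdd (x.left i))).symm
    rw [h1, map_natCast]
  rw [Finset.sum_congr rfl (fun i _ => hc i)]

end ACPAux

/-- the kernel of `p : A_{r,n} → G_{r/2,n}` has exactly `2^{n-1}` elements. -/
theorem ker_pmap_card (r n : ℕ) (hn : 1 ≤ n) (hr : r % 4 = 2) :
    Nat.card {x : ACP.G r n // x ∈ ACP.Arn r n (by omega) ∧ ACP.pmap r n x = 1} =
      2 ^ (n - 1) := by
  classical
  haveI : NeZero r := ⟨by omega⟩
  have h2 : (2 : ℕ) ∣ r := by omega
  have hrodd : r / 2 % 2 = 1 := by omega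
  -- the sum homomorphism on color-parity vectors
  let S : (Fin n → ZMod 2) →+ ZMod 2 :=
    { toFun := fun v => ∑ i, v i
      map_zero' := by simp
      map_add' := fun v w => by simp [Finset.sum_add_distrib] }
  have hSval : ∀ v, S v = ∑ i, v i := fun v => rfl
  -- zval of the standard element
  have hzv : ∀ (v : Fin n → ZMod 2) (i : Fin n),
      ACP.zval r n (⟨fun j => Multiplicative.ofAdd ((((v j).val * (r/2) : ℕ) : ZMod r)), 1⟩ : ACP.G r n) i
        = (v i).val * (r/2) := by
    intro v i
    have hvlt : (v i).val < 2 := ZMod.val_lt _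
    unfold ACP.zval
    refine ZMod.val_cast_of_lt ?_
    have h1 : (v i).val ≤ 1 := by omega
    have h3 : (v i).val * (r/2) ≤ 1 * (r/2) := Nat.mul_le_mul_right _ h1
    omega
  -- the equivalence between S.ker and the kernel of pmap
  have e : S.ker ≃ {x : ACP.G r n // x ∈ ACP.Arn r n (by omega) ∧ ACP.pmap r n x = 1} := by
    refine
      { toFun := fun v => ⟨⟨fun j => Multiplicative.ofAdd ((((v.1 j).val * (r/2) : ℕ) : ZMod r)), 1⟩, ?_, ?_⟩
        invFun := fun x => ⟨fun i => ((ACP.zval r n x.1 i : ℕ) : ZMod 2), ?_⟩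
        left_inv := ?_
        right_inv := ?_ }
    · -- membership in Arn
      rw [ACPAux.mem_iff r n hr _ _ rfl]
      have : ∀ i : Fin n, ((ACP.zval r n (⟨fun j => Multiplicative.ofAdd ((((v.1 j).val * (r/2) : ℕ) : ZMod r)), 1⟩ : ACP.G r n) i : ℕ) : ZMod 2) = v.1 i := by
        intro i
        rw [hzv v.1 i]
        push_cast
        rw [← ZMod.natCast_mod (r/2) 2, hrodd]
        push_cast
        rw [mul_one, ZMod.natCast_rightInverse (v.1 i)]
      rw [Finset.sum_congr rfl (fun i _ => this i)]
      exact v.2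
    · -- pmap = 1
      rw [ACPAux.pmap_eq_one_iff r n hr]
      refine ⟨rfl, fun i => ?_⟩
      rw [hzv v.1 i]
      have hvlt : (v.1 i).val < 2 := ZMod.val_lt _
      interval_cases h : (v.1 i).val <;> simp
    · -- invFun lands in kernel of S
      rw [AddMonoidHom.mem_ker, hSval]
      exact (ACPAux.mem_iff r n hr _ x.1 ((ACPAux.pmap_eq_one_iff r n hr x.1).mp x.2.2).1).mp x.2.1
    · -- left inverse
      intro v
      ext i
      show ((ACP.zval r n _ i : ℕ) : ZMod 2) = v.1 i
      rw [hzv v.1 i]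
      push_cast
      rw [← ZMod.natCast_mod (r/2) 2, hrodd]
      push_cast
      rw [mul_one, ZMod.natCast_rightInverse (v.1 i)]
    · -- right inverse
      intro x
      obtain ⟨hrg, hvals⟩ := (ACPAux.pmap_eq_one_iff r n hr x.1).mp x.2.2
      refine Subtype.ext (SemidirectProduct.ext ?_ hrg.symm)
      funext i
      show Multiplicative.ofAdd (((((ACP.zval r n x.1 i : ℕ) : ZMod 2).val * (r/2) : ℕ) : ZMod r)) = x.1.left i
      rw [ACPAux.left_eq r n x.1 i]
      have hnat : (((ACP.zval r n x.1 i : ℕ) : ZMod 2)).val * (r/2) = ACP.zval r n x.1 i := by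
        rcases hvals i with h0 | h0 <;> rw [h0]
        · rw [Nat.cast_zero, ZMod.val_zero, zero_mul]
        · rw [← ZMod.natCast_mod (r/2) 2, hrodd, Nat.cast_one,
            show (1 : ZMod 2).val = 1 from rfl, one_mul]
      rw [hnat]
  rw [Nat.card_congr e.symm]
  -- now count the kernel of S
  have hSsurj : Function.Surjective S := by
    intro c
    refine ⟨fun i => if i = (⟨0, by omega⟩ : Fin n) then c else 0, ?_⟩
    rw [hSval]
    simp
  have hq : Nat.card ((Fin n → ZMod 2) ⧸ S.ker) = 2 := by
    rw [Nat.card_congr (QuotientAddGroup.quotientKerEquivOfSurjective S hSsurj).toEquiv]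
    simp [Nat.card_zmod]
  have htot : Nat.card (Fin n → ZMod 2) = 2 ^ n := by
    simp [Nat.card_eq_fintype_card]
  have hmul := AddSubgroup.card_eq_card_quotient_mul_card_addSubgroup S.ker
  rw [htot, hq] at hmul
  have hpow : 2 ^ n = 2 * 2 ^ (n - 1) := by
    rw [← pow_succ']
    congr 1
    omega
  omega
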